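/- Let (X, 𝕌) be a locally compact Hausdorff uniform space. The map sending each sequence x with nonempty I^K-cluster set to C_x(I^K) is continuous from the space of such sequences (with the sup-uniformity) to the nonempty closed subsets of X with the lower Vietoris topology. -/

import Mathlib

open Set Topology

attribute [local instance] Classical.propDecidable

variable {S X : Type*}

/-- An ideal on a set: family of subsets closed under subsets and finite unions. -/
def IsIdeal (I : Set (Set S)) : Prop :=
  ∅ ∈ I ∧ (∀ ⦃A B : Set S⦄, A ∈ I → B ⊆ A → B ∈ I) ∧
    ∀ ⦃A B : Set S⦄, A ∈ I → B ∈ I → A ∪ B ∈ I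

/-- An admissible ideal: nontrivial ideal containing all singletons. -/
def IsAdmissible (I : Set (Set S)) : Prop :=
  IsIdeal I ∧ Set.univ ∉ I ∧ ∀ s : S, {s} ∈ I

/-- `x` is an `I^K`-cluster point of `f`: there is `M ∈ F(I)` (i.e. `Mᶜ ∈ I`) such that
the function equal to `f` on `M` and constantly `x` off `M` has `x` as a `K`-cluster point. -/
def IKClusterPt [TopologicalSpace X] (I K : Set (Set S)) (f : S → X) (x : X) : Prop :=
  ∃ M : Set S, Mᶜ ∈ I ∧ ∀ U : Set X, IsOpen U → x ∈ U →
    {s : S | (if s ∈ M then f s else x) ∈ U} ∉ K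

/-- Finite unions of members of an ideal belong to the ideal. -/
lemma isIdeal_biUnion_finset {K : Set (Set ℕ)} (hK : IsIdeal K) {ι : Type*} (t : Finset ι)
    (f : ι → Set ℕ) (h : ∀ i ∈ t, f i ∈ K) : (⋃ i ∈ t, f i) ∈ K := by
  classical
  induction t using Finset.induction with
  | empty => simpa using hK.1
  | @insert a s hi ih =>
    rw [Finset.set_biUnion_insert]
    exact hK.2.2 (h a (Finset.mem_insert_self a s))
      (ih fun i hi' => h i (Finset.mem_insert_of_mem hi'))

theorem gamma_lowerVietoris_continuous [UniformSpace X] [T2Space X] [LocallyCompactSpace X]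
    (I K : Set (Set ℕ)) (hI : IsIdeal I) (hK : IsIdeal K) :
    ∀ x : ℕ → X, {p : X | IKClusterPt I K x p}.Nonempty →
      ∀ O : Set X, IsOpen O → ({p : X | IKClusterPt I K x p} ∩ O).Nonempty →
        ∃ V ∈ uniformity X, ∀ y : ℕ → X, {p : X | IKClusterPt I K y p}.Nonempty →
          (∀ n, (x n, y n) ∈ V) → ({p : X | IKClusterPt I K y p} ∩ O).Nonempty := by
  intro x _ O hO ⟨p, hp, hpO⟩
  obtain ⟨C, hCcomp, hpint, hCO⟩ := exists_compact_subset hO hpO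
  have hpC : p ∈ C := interior_subset hpint
  obtain ⟨W, hW, hWball⟩ :=
    UniformSpace.mem_nhds_iff.mp (isOpen_interior.mem_nhds hpint)
  obtain ⟨V₀, hV₀, hV₀W⟩ := comp_mem_uniformity_sets hW
  obtain ⟨V, ⟨hV, hVopen⟩, hVV₀⟩ := (uniformity_hasBasis_open (α := X)).mem_iff.mp hV₀
  refine ⟨V, hV, ?_⟩
  intro y _ hxy
  obtain ⟨M, hMI, hMcl⟩ := hp
  set w : ℕ → X := fun s => if s ∈ M then y s else p with hw
  -- frequently (mod K), w lands in C
  have hwC : {s : ℕ | w s ∈ C} ∉ K := by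
    have h1 : {s : ℕ | (if s ∈ M then x s else p) ∈ UniformSpace.ball p V} ∉ K :=
      hMcl _ (UniformSpace.isOpen_ball p hVopen) (UniformSpace.mem_ball_self p hV)
    intro hmem
    apply h1
    refine hK.2.1 hmem ?_
    intro s hs
    simp only [mem_setOf_eq] at hs
    show (if s ∈ M then y s else p) ∈ C
    by_cases hsM : s ∈ M
    · simp only [hsM, if_pos] at hs ⊢
      have : y s ∈ UniformSpace.ball p W :=
        hV₀W (⟨x s, hVV₀ hs, hVV₀ (hxy s)⟩ : (p, y s) ∈ SetRel.comp V₀ V₀)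
      exact interior_subset (hWball this)
    · simpa [hsM] using hpC
  -- w has a K-cluster point in C
  have hq : ∃ q ∈ C, ∀ U : Set X, IsOpen U → q ∈ U → {s : ℕ | w s ∈ U} ∉ K := by
    by_contra hcon
    push_neg at hcon
    choose U hUo hqU hUK using hcon
    obtain ⟨t, ht⟩ := hCcomp.elim_finite_subcover (fun q : C => U q q.2)
      (fun q => hUo q q.2) (fun z hz => mem_iUnion.2 ⟨⟨z, hz⟩, hqU z hz⟩)
    apply hwC
    refine hK.2.1 (isIdeal_biUnion_finset hK t (fun q : C => {s : ℕ | w s ∈ U q q.2})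
      (fun i _ => hUK i i.2)) ?_
    intro s hs
    have := ht hs
    rw [mem_iUnion₂] at this ⊢
    obtain ⟨i, hit, hi⟩ := this
    exact ⟨i, hit, hi⟩
  obtain ⟨q, hqC, hqcl⟩ := hq
  refine ⟨q, ⟨M, hMI, ?_⟩, hCO hqC⟩
  intro U hUo hqU hmem
  apply hqcl U hUo hqU
  refine hK.2.1 hmem ?_
  intro s hs
  have hs' : (if s ∈ M then y s else p) ∈ U := hs
  show (if s ∈ M then y s else q) ∈ U
  by_cases hsM : s ∈ M
  · simpa [hsM] using hs'
  · simpa [hsM] using hqU
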